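/- Fix K ∈ ℝ, real N > 1 and R > 0 with K·R² < (N−1)·π². Then the function r ↦ φ_{K,N}(r,R) is twice differentiable on (0,R) with (d²/dr²) φ_{K,N}(r,R) = 1 + (N−1)·(s'_{K,N}(r)/s_{K,N}(r))·∫_r^R (s_{K,N}(η)/s_{K,N}(r))^{N−1} dη, where s'_{K,N} denotes the derivative of s_{K,N}. -/

import Mathlib

open Real intervalIntegral

/-- The comparison function `s_{K,N}`. -/
noncomputable def sKN (K N θ : ℝ) : ℝ :=
  if 0 < K then Real.sqrt ((N - 1) / K) * Real.sin (θ * Real.sqrt (K / (N - 1)))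
  else if K = 0 then θ
  else Real.sqrt ((N - 1) / (-K)) * Real.sinh (θ * Real.sqrt (-K / (N - 1)))

/-- `φ_{K,N}(r,R) = ∫∫_{r ≤ ξ ≤ η ≤ R} (s_{K,N}(η)/s_{K,N}(ξ))^{N−1} dη dξ`. -/
noncomputable def phiKN (K N r R : ℝ) : ℝ :=
  ∫ ξ in r..R, ∫ η in ξ..R, (sKN K N η / sKN K N ξ) ^ (N - 1)

lemma sKN_continuous (K N : ℝ) : Continuous (sKN K N) := by
  unfold sKN; split_ifs <;> fun_prop

lemma sKN_differentiable (K N : ℝ) : Differentiable ℝ (sKN K N) := by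
  unfold sKN; split_ifs <;> fun_prop

lemma sKN_pos_exists (K N R : ℝ) (hN : 1 < N) (hR : 0 < R)
    (hKR : K * R ^ 2 < (N - 1) * Real.pi ^ 2) :
    ∃ Rm, R < Rm ∧ ∀ θ ∈ Set.Ioo (0:ℝ) Rm, 0 < sKN K N θ := by
  have hN1 : (0:ℝ) < N - 1 := by linarith
  rcases lt_trichotomy K 0 with hK | hK | hK
  · refine ⟨R + 1, by linarith, fun θ hθ => ?_⟩
    have h1 : ¬ (0 < K) := by linarith
    have h2 : K ≠ 0 := hK.ne
    simp only [sKN, h1, h2, if_false]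
    have hs1 : 0 < Real.sqrt ((N - 1) / (-K)) :=
      Real.sqrt_pos.mpr (div_pos hN1 (by linarith))
    have hs2 : 0 < Real.sqrt (-K / (N - 1)) :=
      Real.sqrt_pos.mpr (div_pos (by linarith) hN1)
    exact mul_pos hs1 (Real.sinh_pos_iff.mpr (mul_pos hθ.1 hs2))
  · refine ⟨R + 1, by linarith, fun θ hθ => ?_⟩
    subst hK
    simpa [sKN] using hθ.1
  · have hc : 0 < Real.sqrt (K / (N - 1)) := Real.sqrt_pos.mpr (div_pos hK hN1)
    refine ⟨Real.pi / Real.sqrt (K / (N - 1)), ?_, fun θ hθ => ?_⟩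
    · rw [lt_div_iff₀ hc]
      have h1 : (R * Real.sqrt (K / (N - 1))) ^ 2 < Real.pi ^ 2 := by
        rw [mul_pow, Real.sq_sqrt (div_pos hK hN1).le]
        have heq : R ^ 2 * (K / (N - 1)) = K * R ^ 2 / (N - 1) := by ring
        rw [heq, div_lt_iff₀ hN1]
        linarith
      exact lt_of_pow_lt_pow_left₀ 2 Real.pi_pos.le h1
    · simp only [sKN, hK, if_true]
      have hs1 : 0 < Real.sqrt ((N - 1) / K) := Real.sqrt_pos.mpr (div_pos hN1 hK)
      refine mul_pos hs1 (Real.sin_pos_of_pos_of_lt_pi (mul_pos hθ.1 hc) ?_)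
      calc θ * Real.sqrt (K / (N - 1)) < (Real.pi / Real.sqrt (K / (N - 1))) * Real.sqrt (K / (N - 1)) := by
            exact mul_lt_mul_of_pos_right hθ.2 hc
      _ = Real.pi := div_mul_cancel₀ _ hc.ne'

/-- Auxiliary: `F x = ∫ₓ^R s^{N-1}`. -/
noncomputable def FAux (K N R x : ℝ) : ℝ := ∫ η in x..R, sKN K N η ^ (N - 1)

/-- Auxiliary: the inner integral. -/
noncomputable def gAux (K N R ξ : ℝ) : ℝ := ∫ η in ξ..R, (sKN K N η / sKN K N ξ) ^ (N - 1)

/-- Auxiliary: product form of the inner integral. -/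
noncomputable def GAux (K N R x : ℝ) : ℝ := FAux K N R x * sKN K N x ^ (-(N - 1))

theorem phiKN_second_deriv (K N R : ℝ) (hN : 1 < N) (hR : 0 < R)
    (hKR : K * R ^ 2 < (N - 1) * Real.pi ^ 2) :
    ∀ r ∈ Set.Ioo (0 : ℝ) R,
      HasDerivAt (fun r => phiKN K N r R) (deriv (fun r => phiKN K N r R) r) r ∧
      HasDerivAt (deriv (fun r => phiKN K N r R))
        (1 + (N - 1) * (deriv (sKN K N) r / sKN K N r) *
          ∫ η in r..R, (sKN K N η / sKN K N r) ^ (N - 1)) r := by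
  obtain ⟨Rm, hRRm, hpos⟩ := sKN_pos_exists K N R hN hR hKR
  have hN1 : (0:ℝ) < N - 1 := by linarith
  have hscont : Continuous (sKN K N) := sKN_continuous K N
  have hsdiff : Differentiable ℝ (sKN K N) := sKN_differentiable K N
  set U : Set ℝ := Set.Ioo 0 Rm with hU
  have hUopen : IsOpen U := isOpen_Ioo
  have hRU : R ∈ U := ⟨hR, hRRm⟩
  have hUord : Set.OrdConnected U := Set.ordConnected_Ioo
  -- the integrand of F is continuous
  have hhcont : Continuous (fun η => sKN K N η ^ (N - 1)) :=
    hscont.rpow_const (fun x => Or.inr hN1.le)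
  -- derivative of F
  have hFder : ∀ x, HasDerivAt (FAux K N R) (-(sKN K N x ^ (N - 1))) x := by
    intro x
    have h1 : HasDerivAt (fun u => ∫ η in R..u, sKN K N η ^ (N - 1)) (sKN K N x ^ (N - 1)) x :=
      intervalIntegral.integral_hasDerivAt_right (hhcont.intervalIntegrable R x)
        (hhcont.stronglyMeasurableAtFilter _ _) hhcont.continuousAt
    have heq : FAux K N R = fun u => -∫ η in R..u, sKN K N η ^ (N - 1) := by
      funext u
      rw [FAux, intervalIntegral.integral_symm]
    rw [heq]; exact h1.neg
  have hFcont : Continuous (FAux K N R) :=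
    continuous_iff_continuousAt.mpr fun x => (hFder x).continuousAt
  -- g = G on U
  have hgG : ∀ x ∈ U, gAux K N R x = GAux K N R x := by
    intro x hx
    have hsx := hpos x hx
    have hsub : Set.uIcc x R ⊆ U := hUord.uIcc_subset hx hRU
    have hcongr : ∀ η ∈ Set.uIcc x R,
        (sKN K N η / sKN K N x) ^ (N - 1) = sKN K N η ^ (N - 1) * sKN K N x ^ (-(N - 1)) := by
      intro η hη
      have hsη := hpos η (hsub hη)
      rw [Real.div_rpow hsη.le hsx.le, Real.rpow_neg hsx.le, div_eq_mul_inv]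
    calc gAux K N R x
        = ∫ η in x..R, sKN K N η ^ (N - 1) * sKN K N x ^ (-(N - 1)) :=
          intervalIntegral.integral_congr hcongr
      _ = (∫ η in x..R, sKN K N η ^ (N - 1)) * sKN K N x ^ (-(N - 1)) :=
          intervalIntegral.integral_mul_const _ _
      _ = GAux K N R x := rfl
  -- continuity of G and g on U
  have hGcont : ContinuousOn (GAux K N R) U :=
    hFcont.continuousOn.mul
      (hscont.continuousOn.rpow_const fun x hx => Or.inl (hpos x hx).ne')
  have hgcont : ContinuousOn (gAux K N R) U := hGcont.congr hgG
  -- first derivative of φ on U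
  have hφder : ∀ x ∈ U, HasDerivAt (fun y => phiKN K N y R) (-(gAux K N R x)) x := by
    intro x hx
    have hsub : Set.uIcc R x ⊆ U := hUord.uIcc_subset hRU hx
    have h1 : HasDerivAt (fun u => ∫ ξ in R..u, gAux K N R ξ) (gAux K N R x) x :=
      intervalIntegral.integral_hasDerivAt_right
        ((hgcont.mono hsub).intervalIntegrable)
        (hgcont.stronglyMeasurableAtFilter hUopen x hx)
        (hgcont.continuousAt (hUopen.mem_nhds hx))
    have heq : (fun y => phiKN K N y R) = fun u => -∫ ξ in R..u, gAux K N R ξ := by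
      funext u
      rw [phiKN, intervalIntegral.integral_symm]
      rfl
    rw [heq]; exact h1.neg
  -- main statement
  intro r hr
  have hrU : r ∈ U := ⟨hr.1, hr.2.trans hRRm⟩
  have hsr : 0 < sKN K N r := hpos r hrU
  refine ⟨(hφder r hrU).differentiableAt.hasDerivAt, ?_⟩
  -- deriv φ = -g near r
  have hEv : deriv (fun y => phiKN K N y R) =ᶠ[nhds r] fun x => -(gAux K N R x) :=
    Filter.eventuallyEq_of_mem (hUopen.mem_nhds hrU) fun x hx => (hφder x hx).deriv
  have hgG_ev : gAux K N R =ᶠ[nhds r] GAux K N R :=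
    Filter.eventuallyEq_of_mem (hUopen.mem_nhds hrU) fun x hx => hgG x hx
  -- derivative of G at r
  have hGder : HasDerivAt (GAux K N R)
      ((-(sKN K N r ^ (N - 1))) * sKN K N r ^ (-(N - 1)) +
        FAux K N R r * (deriv (sKN K N) r * (-(N - 1)) * sKN K N r ^ (-(N - 1) - 1))) r :=
    (hFder r).mul (((hsdiff r).hasDerivAt).rpow_const (Or.inl hsr.ne'))
  have hval : (-(sKN K N r ^ (N - 1))) * sKN K N r ^ (-(N - 1)) +
        FAux K N R r * (deriv (sKN K N) r * (-(N - 1)) * sKN K N r ^ (-(N - 1) - 1))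
      = -(1 + (N - 1) * (deriv (sKN K N) r / sKN K N r) * gAux K N R r) := by
    have e2 : sKN K N r ^ (-(N - 1) - 1) = (sKN K N r ^ (N - 1))⁻¹ / sKN K N r := by
      rw [Real.rpow_sub hsr (-(N - 1)) 1, Real.rpow_one, Real.rpow_neg hsr.le (N - 1)]
    have e1 : sKN K N r ^ (-(N - 1)) = (sKN K N r ^ (N - 1))⁻¹ := Real.rpow_neg hsr.le _
    rw [hgG r hrU, GAux, e2, e1]
    have ha : sKN K N r ^ (N - 1) ≠ 0 := (Real.rpow_pos_of_pos hsr _).ne'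
    set a := sKN K N r ^ (N - 1) with hA
    set b := sKN K N r with hB
    clear_value a b
    clear hA hB
    field_simp
    ring
  rw [hval] at hGder
  have hgder : HasDerivAt (gAux K N R)
      (-(1 + (N - 1) * (deriv (sKN K N) r / sKN K N r) * gAux K N R r)) r :=
    hgG_ev.hasDerivAt_iff.mpr hGder
  have h2 : HasDerivAt (fun x => -(gAux K N R x))
      (1 + (N - 1) * (deriv (sKN K N) r / sKN K N r) * gAux K N R r) r := by
    have h3 := hgder.neg
    rwa [neg_neg] at h3
  exact hEv.hasDerivAt_iff.mpr h2
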